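/- Combining the width bound with the imitation-learning reduction: if for all states s the MCNN policy class satisfies max over parameters of per-action probability deviation at most L·(1 − e^{−λ d^I_B}), and the expert policy is realizable within the class, then the sub-optimality gap of a learned MCNN policy satisfies J(π*) − J(π̂) ≤ min{H, H²·|A|·L·(1 − e^{−λ·d^I_B})}. -/

import Mathlib

/-- State distribution at time `t` induced by rolling out policy `π` from initial
distribution `init` in an MDP with transition kernel `P`. -/
noncomputable def stateDist {S A : Type*} [Fintype S] [Fintype A]
    (P : S → A → S → ℝ) (π : S → A → ℝ) (init : S → ℝ) : ℕ → S → ℝ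
  | 0 => init
  | t + 1 => fun s' => ∑ s, ∑ a, stateDist P π init t s * π s a * P s a s'

/-- Expected cumulative reward of policy `π` over horizon `H`. -/
noncomputable def expReturn {S A : Type*} [Fintype S] [Fintype A]
    (P : S → A → S → ℝ) (R : S → A → ℝ) (π : S → A → ℝ) (init : S → ℝ) (H : ℕ) : ℝ :=
  ∑ t ∈ Finset.range H, ∑ s, ∑ a, stateDist P π init t s * π s a * R s a

section aux
variable {S A : Type*} [Fintype S] [Fintype A]

lemma sd_nonneg (P : S → A → S → ℝ) (hP0 : ∀ s a s', 0 ≤ P s a s')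
    (π : S → A → ℝ) (hπ0 : ∀ s a, 0 ≤ π s a)
    (init : S → ℝ) (hinit0 : ∀ s, 0 ≤ init s) :
    ∀ t s, 0 ≤ stateDist P π init t s := by
  intro t
  induction t with
  | zero => exact hinit0
  | succ t ih =>
    intro s'
    simp only [stateDist]
    refine Finset.sum_nonneg fun s _ => Finset.sum_nonneg fun a _ => ?_
    exact mul_nonneg (mul_nonneg (ih s) (hπ0 s a)) (hP0 s a s')

lemma sd_sum (P : S → A → S → ℝ) (hP1 : ∀ s a, ∑ s', P s a s' = 1)
    (π : S → A → ℝ) (hπ1 : ∀ s, ∑ a, π s a = 1)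
    (init : S → ℝ) (hinit1 : ∑ s, init s = 1) :
    ∀ t, ∑ s, stateDist P π init t s = 1 := by
  intro t
  induction t with
  | zero => exact hinit1
  | succ t ih =>
    simp only [stateDist]
    rw [Finset.sum_comm]
    calc ∑ s, ∑ s', ∑ a, stateDist P π init t s * π s a * P s a s'
        = ∑ s, ∑ a, ∑ s', stateDist P π init t s * π s a * P s a s' :=
          Finset.sum_congr rfl fun s _ => Finset.sum_comm
      _ = ∑ s, stateDist P π init t s := by
          refine Finset.sum_congr rfl fun s _ => ?_
          calc ∑ a, ∑ s', stateDist P π init t s * π s a * P s a s'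
              = ∑ a, stateDist P π init t s * π s a := by
                refine Finset.sum_congr rfl fun a _ => ?_
                rw [← Finset.mul_sum, hP1, mul_one]
            _ = stateDist P π init t s := by rw [← Finset.mul_sum, hπ1, mul_one]
      _ = 1 := ih

lemma expReturn_le (P : S → A → S → ℝ) (hP0 : ∀ s a s', 0 ≤ P s a s')
    (hP1 : ∀ s a, ∑ s', P s a s' = 1)
    (R : S → A → ℝ) (hR : ∀ s a, R s a ∈ Set.Icc (0 : ℝ) 1)
    (π : S → A → ℝ) (hπ0 : ∀ s a, 0 ≤ π s a) (hπ1 : ∀ s, ∑ a, π s a = 1)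
    (init : S → ℝ) (hinit0 : ∀ s, 0 ≤ init s) (hinit1 : ∑ s, init s = 1) (H : ℕ) :
    expReturn P R π init H ≤ H := by
  unfold expReturn
  calc ∑ t ∈ Finset.range H, ∑ s, ∑ a, stateDist P π init t s * π s a * R s a
      ≤ ∑ _t ∈ Finset.range H, (1 : ℝ) := by
        refine Finset.sum_le_sum fun t _ => ?_
        calc ∑ s, ∑ a, stateDist P π init t s * π s a * R s a
            ≤ ∑ s, ∑ a, stateDist P π init t s * π s a := by
              refine Finset.sum_le_sum fun s _ => Finset.sum_le_sum fun a _ => ?_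
              have h0 := mul_nonneg (sd_nonneg P hP0 π hπ0 init hinit0 t s) (hπ0 s a)
              calc stateDist P π init t s * π s a * R s a
                  ≤ stateDist P π init t s * π s a * 1 :=
                    mul_le_mul_of_nonneg_left (hR s a).2 h0
                _ = stateDist P π init t s * π s a := mul_one _
          _ = ∑ s, stateDist P π init t s := by
              refine Finset.sum_congr rfl fun s _ => ?_
              rw [← Finset.mul_sum, hπ1, mul_one]
          _ = 1 := sd_sum P hP1 π hπ1 init hinit1 t
    _ = H := by simp

lemma expReturn_nonneg (P : S → A → S → ℝ) (hP0 : ∀ s a s', 0 ≤ P s a s')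
    (R : S → A → ℝ) (hR : ∀ s a, R s a ∈ Set.Icc (0 : ℝ) 1)
    (π : S → A → ℝ) (hπ0 : ∀ s a, 0 ≤ π s a)
    (init : S → ℝ) (hinit0 : ∀ s, 0 ≤ init s) (H : ℕ) :
    0 ≤ expReturn P R π init H := by
  unfold expReturn
  refine Finset.sum_nonneg fun t _ => Finset.sum_nonneg fun s _ =>
    Finset.sum_nonneg fun a _ => ?_
  exact mul_nonneg (mul_nonneg (sd_nonneg P hP0 π hπ0 init hinit0 t s) (hπ0 s a)) (hR s a).1

end aux

/-- Combining the MCNN width bound with the imitation-learning reduction: if the learned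
MCNN policy deviates from the (realizable) expert by at most `L(1 − e^{−λ dᴵ_B})` in each
action probability at every state, then the sub-optimality gap is at most
`min {H, H²·|A|·L·(1 − e^{−λ dᴵ_B})}`, where `dᴵ_B` is the isolation radius of the
memory set `B|_S`. -/
theorem stmt_11 {S A : Type*} [Fintype S] [Fintype A] [MetricSpace S]
    (H : ℕ) (hH : 0 < H)
    (P : S → A → S → ℝ) (hP0 : ∀ s a s', 0 ≤ P s a s') (hP1 : ∀ s a, ∑ s', P s a s' = 1)
    (R : S → A → ℝ) (hR : ∀ s a, R s a ∈ Set.Icc (0 : ℝ) 1)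
    (init : S → ℝ) (hinit0 : ∀ s, 0 ≤ init s) (hinit1 : ∑ s, init s = 1)
    (M : Finset S) (hM : M.Nonempty)
    (lam L : ℝ) (hlam : 0 < lam) (hL : 0 < L)
    (pihat pistar : S → A → ℝ)
    (hphat0 : ∀ s a, 0 ≤ pihat s a) (hphat1 : ∀ s, ∑ a, pihat s a = 1)
    (hpstar0 : ∀ s a, 0 ≤ pistar s a) (hpstar1 : ∀ s, ∑ a, pistar s a = 1)
    (hwidth : ∀ s a, |pihat s a - pistar s a| ≤
        L * (1 - Real.exp (-lam * ⨆ y : S, ⨅ m : M, dist y (m : S)))) :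
    expReturn P R pistar init H - expReturn P R pihat init H ≤
      min (H : ℝ) ((H : ℝ) ^ 2 * (Fintype.card A : ℝ) * L *
        (1 - Real.exp (-lam * ⨆ y : S, ⨅ m : M, dist y (m : S)))) := by
  set ε := L * (1 - Real.exp (-lam * ⨆ y : S, ⨅ m : M, dist y (m : S))) with hεdef
  -- nonemptiness
  have hSne : Nonempty S := by
    rcases isEmpty_or_nonempty S with h | h
    · exfalso; rw [Finset.univ_eq_empty, Finset.sum_empty] at hinit1; norm_num at hinit1
    · exact h
  obtain ⟨s₀⟩ := hSne
  have hAne : Nonempty A := by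
    rcases isEmpty_or_nonempty A with h | h
    · exfalso
      have := hphat1 s₀
      rw [Finset.univ_eq_empty, Finset.sum_empty] at this; norm_num at this
    · exact h
  obtain ⟨a₀⟩ := hAne
  have hε0 : 0 ≤ ε := le_trans (abs_nonneg _) (hwidth s₀ a₀)
  have hcA0 : (0 : ℝ) ≤ (Fintype.card A : ℝ) * ε :=
    mul_nonneg (Nat.cast_nonneg _) hε0
  set ρs := stateDist P pistar init with hρs
  set ρh := stateDist P pihat init with hρh
  have hρs0 := sd_nonneg P hP0 pistar hpstar0 init hinit0
  have hρh0 := sd_nonneg P hP0 pihat hphat0 init hinit0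
  have hρs1 := sd_sum P hP1 pistar hpstar1 init hinit1
  have hρh1 := sd_sum P hP1 pihat hphat1 init hinit1
  -- pointwise bound on joint (state,action) occupancy difference
  have hpt : ∀ t s a, |ρs t s * pistar s a - ρh t s * pihat s a| ≤
      |ρs t s - ρh t s| * pistar s a + ρh t s * ε := by
    intro t s a
    have hdec : ρs t s * pistar s a - ρh t s * pihat s a
        = (ρs t s - ρh t s) * pistar s a + ρh t s * (pistar s a - pihat s a) := by ring
    rw [hdec]
    refine (abs_add_le _ _).trans (add_le_add ?_ ?_)
    · rw [abs_mul, abs_of_nonneg (hpstar0 s a)]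
    · rw [abs_mul, abs_of_nonneg (hρh0 t s)]
      refine mul_le_mul_of_nonneg_left ?_ (hρh0 t s)
      rw [abs_sub_comm]; exact hwidth s a
  -- summed version
  have hstep : ∀ t, ∑ s, ∑ a, |ρs t s * pistar s a - ρh t s * pihat s a| ≤
      (∑ s, |ρs t s - ρh t s|) + (Fintype.card A : ℝ) * ε := by
    intro t
    calc ∑ s, ∑ a, |ρs t s * pistar s a - ρh t s * pihat s a|
        ≤ ∑ s, ∑ a, (|ρs t s - ρh t s| * pistar s a + ρh t s * ε) :=
          Finset.sum_le_sum fun s _ => Finset.sum_le_sum fun a _ => hpt t s a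
      _ = ∑ s, (|ρs t s - ρh t s| + (Fintype.card A : ℝ) * (ρh t s * ε)) := by
          refine Finset.sum_congr rfl fun s _ => ?_
          rw [Finset.sum_add_distrib, ← Finset.mul_sum, hpstar1, mul_one,
            Finset.sum_const, Finset.card_univ, nsmul_eq_mul]
      _ = (∑ s, |ρs t s - ρh t s|) + (Fintype.card A : ℝ) * ε := by
          rw [Finset.sum_add_distrib, ← Finset.mul_sum]
          congr 1
          rw [← Finset.sum_mul, hρh1 t, one_mul]
  -- TV distance recursion
  have hdtv : ∀ t, ∑ s, |ρs t s - ρh t s| ≤ (t : ℝ) * ((Fintype.card A : ℝ) * ε) := by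
    intro t
    induction t with
    | zero => simp [hρs, hρh, stateDist]
    | succ t ih =>
      have hrec : ∀ s', ρs (t + 1) s' - ρh (t + 1) s' =
          ∑ s, ∑ a, (ρs t s * pistar s a - ρh t s * pihat s a) * P s a s' := by
        intro s'
        rw [hρs, hρh]
        simp only [stateDist]
        rw [← Finset.sum_sub_distrib]
        refine Finset.sum_congr rfl fun s _ => ?_
        rw [← Finset.sum_sub_distrib]
        refine Finset.sum_congr rfl fun a _ => ?_
        rw [← hρs, ← hρh]
        try ring
      calc ∑ s', |ρs (t + 1) s' - ρh (t + 1) s'|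
          ≤ ∑ s', ∑ s, ∑ a, |(ρs t s * pistar s a - ρh t s * pihat s a)| * P s a s' := by
            refine Finset.sum_le_sum fun s' _ => ?_
            rw [hrec s']
            refine (Finset.abs_sum_le_sum_abs _ _).trans
              (Finset.sum_le_sum fun s _ => (Finset.abs_sum_le_sum_abs _ _).trans
                (Finset.sum_le_sum fun a _ => ?_))
            rw [abs_mul, abs_of_nonneg (hP0 s a s')]
        _ = ∑ s, ∑ a, |ρs t s * pistar s a - ρh t s * pihat s a| := by
            rw [Finset.sum_comm]
            refine Finset.sum_congr rfl fun s _ => ?_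
            rw [Finset.sum_comm]
            refine Finset.sum_congr rfl fun a _ => ?_
            rw [← Finset.mul_sum, hP1, mul_one]
        _ ≤ (∑ s, |ρs t s - ρh t s|) + (Fintype.card A : ℝ) * ε := hstep t
        _ ≤ (t : ℝ) * ((Fintype.card A : ℝ) * ε) + (Fintype.card A : ℝ) * ε :=
            add_le_add_left ih _
        _ = ((t : ℝ) + 1) * ((Fintype.card A : ℝ) * ε) := by ring
        _ = ((t + 1 : ℕ) : ℝ) * ((Fintype.card A : ℝ) * ε) := by push_cast; ring
  -- second (imitation) bound
  have hbound2 : expReturn P R pistar init H - expReturn P R pihat init H ≤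
      (H : ℝ) ^ 2 * (Fintype.card A : ℝ) * L *
        (1 - Real.exp (-lam * ⨆ y : S, ⨅ m : M, dist y (m : S))) := by
    have key : expReturn P R pistar init H - expReturn P R pihat init H ≤
        ∑ t ∈ Finset.range H, (H : ℝ) * ((Fintype.card A : ℝ) * ε) := by
      unfold expReturn
      rw [← Finset.sum_sub_distrib]
      refine Finset.sum_le_sum fun t ht => ?_
      have htH : (t : ℝ) + 1 ≤ (H : ℝ) := by
        have := Finset.mem_range.mp ht
        exact_mod_cast Nat.succ_le_of_lt this
      calc (∑ s, ∑ a, ρs t s * pistar s a * R s a) -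
            ∑ s, ∑ a, ρh t s * pihat s a * R s a
          ≤ ∑ s, ∑ a, |ρs t s * pistar s a - ρh t s * pihat s a| := by
            rw [← Finset.sum_sub_distrib]
            refine Finset.sum_le_sum fun s _ => ?_
            rw [← Finset.sum_sub_distrib]
            refine Finset.sum_le_sum fun a _ => ?_
            have : ρs t s * pistar s a * R s a - ρh t s * pihat s a * R s a =
                (ρs t s * pistar s a - ρh t s * pihat s a) * R s a := by ring
            rw [this]
            calc (ρs t s * pistar s a - ρh t s * pihat s a) * R s a
                ≤ |(ρs t s * pistar s a - ρh t s * pihat s a) * R s a| := le_abs_self _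
              _ = |ρs t s * pistar s a - ρh t s * pihat s a| * |R s a| := abs_mul _ _
              _ ≤ |ρs t s * pistar s a - ρh t s * pihat s a| * 1 := by
                  refine mul_le_mul_of_nonneg_left ?_ (abs_nonneg _)
                  rw [abs_of_nonneg (hR s a).1]; exact (hR s a).2
              _ = |ρs t s * pistar s a - ρh t s * pihat s a| := mul_one _
        _ ≤ (∑ s, |ρs t s - ρh t s|) + (Fintype.card A : ℝ) * ε := hstep t
        _ ≤ (t : ℝ) * ((Fintype.card A : ℝ) * ε) + (Fintype.card A : ℝ) * ε :=
            add_le_add_left (hdtv t) _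
        _ = ((t : ℝ) + 1) * ((Fintype.card A : ℝ) * ε) := by ring
        _ ≤ (H : ℝ) * ((Fintype.card A : ℝ) * ε) :=
            mul_le_mul_of_nonneg_right htH hcA0
    calc expReturn P R pistar init H - expReturn P R pihat init H
        ≤ ∑ t ∈ Finset.range H, (H : ℝ) * ((Fintype.card A : ℝ) * ε) := key
      _ = (H : ℝ) * ((H : ℝ) * ((Fintype.card A : ℝ) * ε)) := by
          rw [Finset.sum_const, Finset.card_range, nsmul_eq_mul]
      _ = (H : ℝ) ^ 2 * (Fintype.card A : ℝ) * L *
            (1 - Real.exp (-lam * ⨆ y : S, ⨅ m : M, dist y (m : S))) := by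
          rw [hεdef]; ring
  refine le_min ?_ hbound2
  have h1 := expReturn_le P hP0 hP1 R hR pistar hpstar0 hpstar1 init hinit0 hinit1 H
  have h2 := expReturn_nonneg P hP0 R hR pihat hphat0 init hinit0 H
  linarith
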